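/- In any interval t-coloring α of a graph G with exactly k colors used exactly once, c_1 < ... < c_2 < ... < c_k, with c_0 = 1 and c_{k+1} = t, the number of colors in the open-ended color range [c_{i−1}, c_i] that are used at least twice is at most ⌊(|C'_i| − 2)/2⌋ for 2 ≤ i ≤ k, where C'_i is the set of edges with colors in [c_{i−1}, c_i]. -/
import Mathlib


/-- An interval `t`-coloring of `G`: a proper edge-coloring with colors `1,…,t`
such that all colors are used and the set of colors incident to each vertex is
an interval of consecutive integers. -/
def IsIntervalColoring {V : Type*} (G : SimpleGraph V) (t : ℕ) (α : Sym2 V → ℕ) : Prop :=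
  (∀ e ∈ G.edgeSet, 1 ≤ α e ∧ α e ≤ t) ∧
  (∀ e ∈ G.edgeSet, ∀ e' ∈ G.edgeSet, e ≠ e' → (∃ v : V, v ∈ e ∧ v ∈ e') → α e ≠ α e') ∧
  (∀ c : ℕ, 1 ≤ c → c ≤ t → ∃ e ∈ G.edgeSet, α e = c) ∧
  (∀ v : V, ∀ c₁ c c₂ : ℕ,
    (∃ e ∈ G.edgeSet, v ∈ e ∧ α e = c₁) → (∃ e ∈ G.edgeSet, v ∈ e ∧ α e = c₂) →
    c₁ ≤ c → c ≤ c₂ → ∃ e ∈ G.edgeSet, v ∈ e ∧ α e = c)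

/-- With `c 1 < ⋯ < c k` all the once-used colors of an interval `t`-coloring
(`c 0 = 1`, `c (k+1) = t`), for `2 ≤ i ≤ k` the number of colors in
`[c (i-1), c i]` used at least twice is at most `⌊(|C'_i| - 2)/2⌋`. -/
theorem twice_used_colors_in_block_bound {V : Type*} [Fintype V]
    (G : SimpleGraph V) (t : ℕ) (α : Sym2 V → ℕ)
    (hα : IsIntervalColoring G t α) (k : ℕ) (c : ℕ → ℕ)
    (h0 : c 0 = 1) (hk1 : c (k + 1) = t)
    (hmono : ∀ i j : ℕ, 1 ≤ i → i < j → j ≤ k → c i < c j)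
    (huniq : ∀ x : ℕ, (∃ i : ℕ, 1 ≤ i ∧ i ≤ k ∧ c i = x) ↔
      {e ∈ G.edgeSet | α e = x}.ncard = 1)
    (i : ℕ) (hi2 : 2 ≤ i) (hik : i ≤ k) :
    {x : ℕ | c (i - 1) ≤ x ∧ x ≤ c i ∧ 2 ≤ {e ∈ G.edgeSet | α e = x}.ncard}.ncard ≤
      ({e ∈ G.edgeSet | c (i - 1) ≤ α e ∧ α e ≤ c i}.ncard - 2) / 2 := by
  classical
  set lo := c (i - 1) with hlo
  set hi := c i with hhi
  have hlohi : lo < hi := hmono (i - 1) i (by omega) (by omega) hik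
  -- Finset versions
  let E : ℕ → Finset (Sym2 V) :=
    fun x => Finset.univ.filter (fun e => e ∈ G.edgeSet ∧ α e = x)
  have hEset : ∀ x, {e ∈ G.edgeSet | α e = x} = ↑(E x) := by
    intro x; ext e; simp [E]
  have hEcard : ∀ x, {e ∈ G.edgeSet | α e = x}.ncard = (E x).card := by
    intro x; rw [hEset x, Set.ncard_coe_finset]
  let F : Finset (Sym2 V) :=
    Finset.univ.filter (fun e => e ∈ G.edgeSet ∧ lo ≤ α e ∧ α e ≤ hi)
  have hFset : {e ∈ G.edgeSet | lo ≤ α e ∧ α e ≤ hi} = ↑F := by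
    ext e; simp [F]
  let T : Finset ℕ := (Finset.Icc lo hi).filter (fun x => 2 ≤ (E x).card)
  have hTset : {x : ℕ | lo ≤ x ∧ x ≤ hi ∧ 2 ≤ {e ∈ G.edgeSet | α e = x}.ncard} = ↑T := by
    ext x; simp [T, hEcard, and_assoc]
  rw [hTset, hFset, Set.ncard_coe_finset, Set.ncard_coe_finset]
  -- once-used colors lo and hi
  have hlo1 : (E lo).card = 1 := by
    rw [← hEcard]; exact (huniq lo).mp ⟨i - 1, by omega, by omega, rfl⟩
  have hhi1 : (E hi).card = 1 := by
    rw [← hEcard]; exact (huniq hi).mp ⟨i, by omega, hik, rfl⟩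
  obtain ⟨e1, he1⟩ := Finset.card_eq_one.mp hlo1
  obtain ⟨e2, he2⟩ := Finset.card_eq_one.mp hhi1
  have he1m : e1 ∈ E lo := by rw [he1]; simp
  have he2m : e2 ∈ E hi := by rw [he2]; simp
  simp only [E, Finset.mem_filter, Finset.mem_univ, true_and] at he1m he2m
  have he1F : e1 ∈ F := by
    simp only [F, Finset.mem_filter, Finset.mem_univ, true_and]
    exact ⟨he1m.1, by omega, by omega⟩
  have he2F : e2 ∈ F := by
    simp only [F, Finset.mem_filter, Finset.mem_univ, true_and]
    exact ⟨he2m.1, by omega, by omega⟩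
  have hne : e1 ≠ e2 := by
    intro h; rw [h] at he1m; omega
  -- the union of color classes of T together with {e1, e2} sits inside F
  have hdisj : ∀ x ∈ T, ∀ y ∈ T, x ≠ y → Disjoint (E x) (E y) := by
    intro x _ y _ hxy
    refine Finset.disjoint_left.mpr ?_
    intro e hex hey
    simp only [E, Finset.mem_filter, Finset.mem_univ, true_and] at hex hey
    exact hxy (hex.2 ▸ hey.2 ▸ rfl)
  have hbU : T.biUnion E ⊆ F := by
    intro e he
    obtain ⟨x, hxT, hex⟩ := Finset.mem_biUnion.mp he
    simp only [T, Finset.mem_filter, Finset.mem_Icc] at hxT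
    simp only [E, Finset.mem_filter, Finset.mem_univ, true_and] at hex
    simp only [F, Finset.mem_filter, Finset.mem_univ, true_and]
    exact ⟨hex.1, by omega, by omega⟩
  have he1nb : e1 ∉ T.biUnion E := by
    intro h
    obtain ⟨x, hxT, hex⟩ := Finset.mem_biUnion.mp h
    simp only [T, Finset.mem_filter, Finset.mem_Icc] at hxT
    simp only [E, Finset.mem_filter, Finset.mem_univ, true_and] at hex
    have hx : x = lo := by omega
    rw [hx] at hxT
    omega
  have he2nb : e2 ∉ T.biUnion E := by
    intro h
    obtain ⟨x, hxT, hex⟩ := Finset.mem_biUnion.mp h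
    simp only [T, Finset.mem_filter, Finset.mem_Icc] at hxT
    simp only [E, Finset.mem_filter, Finset.mem_univ, true_and] at hex
    have hx : x = hi := by omega
    rw [hx] at hxT
    omega
  have hsub : T.biUnion E ∪ {e1, e2} ⊆ F := by
    intro e he
    rcases Finset.mem_union.mp he with h | h
    · exact hbU h
    · rcases Finset.mem_insert.mp h with h | h
      · exact h ▸ he1F
      · exact (Finset.mem_singleton.mp h) ▸ he2F
  have hcard12 : ({e1, e2} : Finset (Sym2 V)).card = 2 :=
    Finset.card_pair hne
  have hdisjU : Disjoint (T.biUnion E) ({e1, e2} : Finset (Sym2 V)) := by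
    refine Finset.disjoint_right.mpr ?_
    intro e he
    rcases Finset.mem_insert.mp he with h | h
    · exact h ▸ he1nb
    · exact (Finset.mem_singleton.mp h) ▸ he2nb
  have hbUcard : 2 * T.card ≤ (T.biUnion E).card := by
    rw [Finset.card_biUnion hdisj]
    calc 2 * T.card = ∑ _x ∈ T, 2 := by rw [Finset.sum_const]; ring
    _ ≤ ∑ x ∈ T, (E x).card := by
        refine Finset.sum_le_sum ?_
        intro x hx
        simp only [T, Finset.mem_filter] at hx
        exact hx.2
  have hF : 2 * T.card + 2 ≤ F.card := by
    calc 2 * T.card + 2 ≤ (T.biUnion E).card + ({e1, e2} : Finset (Sym2 V)).card := by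
          rw [hcard12]; omega
    _ = (T.biUnion E ∪ {e1, e2}).card := (Finset.card_union_of_disjoint hdisjU).symm
    _ ≤ F.card := Finset.card_le_card hsub
  omega
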